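/- arXiv:2305.03516 — 5 statements merged into one kernel-verified Lean document; each statement's English description precedes it below -/
import Mathlib

section
/- For any connected graph G, α_bn(G) < 2·α(G), where α_bn(G) is the maximum cost of a boundary independent broadcast. -/
open SimpleGraph Finset

/-- The eccentricity of a vertex: the maximum distance to any other vertex. -/
noncomputable def ecc {V : Type*} [Fintype V] (G : SimpleGraph V) (v : V) : ℕ :=
  Finset.univ.sup fun u => G.dist v u

/-- A broadcast: each vertex broadcasts with strength at most its eccentricity. -/
def IsBroadcast {V : Type*} [Fintype V] (G : SimpleGraph V) (f : V → ℕ) : Prop :=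
  ∀ v, f v ≤ ecc G v

/-- A boundary independent broadcast. -/
def IsBnIndep {V : Type*} [Fintype V] (G : SimpleGraph V) (f : V → ℕ) : Prop :=
  IsBroadcast G f ∧ ∀ u v, u ≠ v → 1 ≤ f u → 1 ≤ f v → f u + f v ≤ G.dist u v

/-- The maximum cost of a boundary independent broadcast. -/
noncomputable def alphaBn {V : Type*} [Fintype V] (G : SimpleGraph V) : ℕ :=
  sSup {k | ∃ f : V → ℕ, IsBnIndep G f ∧ ∑ v, f v = k}

/-- The independence number. -/
noncomputable def indepNum {V : Type*} [Fintype V] (G : SimpleGraph V) : ℕ :=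
  sSup {k | ∃ s : Finset V, (∀ u ∈ s, ∀ v ∈ s, u ≠ v → ¬ G.Adj u v) ∧ s.card = k}

section Aux

variable {V : Type*} {G : SimpleGraph V}

private lemma aux_adj_dist (h : G.Adj a b) : G.dist a b = 1 :=
  SimpleGraph.dist_eq_one_iff_adj.mpr h

private lemma aux_dist_getVert_le (hG : G.Connected) :
    ∀ {u t : V} (p : G.Walk u t) (i : ℕ), G.dist u (p.getVert i) ≤ i := by
  intro u t p
  induction p with
  | nil =>
    intro i
    rw [SimpleGraph.Walk.getVert_of_length_le _ (by simp), SimpleGraph.dist_self]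
    exact Nat.zero_le _
  | @cons a b c h q ih =>
    intro i
    cases i with
    | zero => simp
    | succ j =>
      rw [SimpleGraph.Walk.getVert_cons_succ]
      have h1 : G.dist a b = 1 := aux_adj_dist h
      have h2 := ih j
      have h3 : G.dist a (q.getVert j) ≤ G.dist a b + G.dist b (q.getVert j) :=
        hG.dist_triangle
      omega

private lemma aux_getVert_dist_le (hG : G.Connected) :
    ∀ {u t : V} (p : G.Walk u t) (i : ℕ), G.dist (p.getVert i) t ≤ p.length - i := by
  intro u t p
  induction p with
  | nil =>
    intro i
    rw [SimpleGraph.Walk.getVert_of_length_le _ (by simp), SimpleGraph.dist_self]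
    exact Nat.zero_le _
  | @cons a b c h q ih =>
    intro i
    cases i with
    | zero =>
      have h1 : G.dist a b = 1 := aux_adj_dist h
      have h2 : G.dist b c ≤ q.length := SimpleGraph.dist_le q
      have h3 : G.dist a c ≤ G.dist a b + G.dist b c := hG.dist_triangle
      have h4 : (SimpleGraph.Walk.cons h q).getVert 0 = a := by simp
      rw [h4, SimpleGraph.Walk.length_cons]
      omega
    | succ j =>
      rw [SimpleGraph.Walk.getVert_cons_succ, SimpleGraph.Walk.length_cons]
      have h2 := ih j
      omega

private lemma aux_dist_getVert_eq (hG : G.Connected) {u t : V} (p : G.Walk u t)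
    (hp : p.length = G.dist u t) (i : ℕ) (hi : i ≤ p.length) :
    G.dist u (p.getVert i) = i := by
  have h1 := aux_dist_getVert_le hG p i
  have h2 := aux_getVert_dist_le hG p i
  have h3 : G.dist u t ≤ G.dist u (p.getVert i) + G.dist (p.getVert i) t :=
    hG.dist_triangle
  omega

end Aux

section Main

variable {V : Type*} [Fintype V]

private lemma aux_card_le_indepNum (G : SimpleGraph V) (s : Finset V)
    (hs : ∀ u ∈ s, ∀ v ∈ s, u ≠ v → ¬ G.Adj u v) : s.card ≤ _root_.indepNum G := by
  apply le_csSup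
  · exact ⟨Fintype.card V, fun k hk => by
      obtain ⟨s', _, hs'⟩ := hk
      rw [← hs']
      exact s'.card_le_univ⟩
  · exact ⟨s, hs, rfl⟩

private lemma aux_key (G : SimpleGraph V) (hG : G.Connected) (f : V → ℕ)
    (hf : IsBnIndep G f) : ∑ v, f v < 2 * _root_.indepNum G := by
  classical
  haveI hne : Nonempty V := hG.nonempty
  obtain ⟨v0⟩ := (inferInstance : Nonempty V)
  -- indepNum ≥ 1 always
  have hind1 : 1 ≤ _root_.indepNum G := by
    have := aux_card_le_indepNum G {v0} (by
      intro u hu v hv huv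
      simp only [Finset.mem_singleton] at hu hv
      exact absurd (hu.trans hv.symm) huv)
    simpa using this
  by_cases h0 : ∀ v, f v = 0
  · have : ∑ v, f v = 0 := Finset.sum_eq_zero fun v _ => h0 v
    omega
  push_neg at h0
  obtain ⟨u0, hu0⟩ := h0
  have hu0' : 1 ≤ f u0 := Nat.one_le_iff_ne_zero.mpr hu0
  -- eccentric vertices and geodesics
  have hecc : ∀ w : V, ∃ s : V, G.dist w s = ecc G w := by
    intro w
    obtain ⟨b, _, hb⟩ := Finset.exists_mem_eq_sup (Finset.univ : Finset V)
      Finset.univ_nonempty (fun u => G.dist w u)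
    exact ⟨b, hb.symm⟩
  choose t ht using hecc
  have hwalk : ∀ w : V, ∃ p : G.Walk w (t w), p.length = G.dist w (t w) := fun w =>
    hG.exists_walk_length_eq_dist w (t w)
  choose p hp using hwalk
  set x : V → ℕ → V := fun w i => (p w).getVert i with hxdef
  have hx : ∀ w i, i ≤ f w → G.dist w (x w i) = i := by
    intro w i hi
    apply aux_dist_getVert_eq hG (p w) (hp w) i
    rw [hp w, ht w]
    exact hi.trans (hf.1 w)
  -- support
  set S : Finset V := Finset.univ.filter (fun w => 1 ≤ f w) with hSdef
  have hSmem : ∀ w, w ∈ S ↔ 1 ≤ f w := by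
    intro w; simp [hSdef]
  have hdistS : ∀ w ∈ S, ∀ w' ∈ S, w ≠ w' → f w + f w' ≤ G.dist w w' := by
    intro w hw w' hw' hne'
    exact hf.2 w w' hne' ((hSmem w).mp hw) ((hSmem w').mp hw')
  set Cw : V → Finset V := fun w => (Finset.range ((f w + 1) / 2)).image (fun j => x w (2 * j))
    with hCwdef
  -- description of members of Cw
  have hCmem : ∀ w ∈ S, ∀ a ∈ Cw w, ∃ j, a = x w (2 * j) ∧ G.dist w a = 2 * j ∧
      2 * j + 1 ≤ f w := by
    intro w hw a ha
    simp only [hCwdef, Finset.mem_image, Finset.mem_range] at ha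
    obtain ⟨j, hj, hja⟩ := ha
    have hfw : 1 ≤ f w := (hSmem w).mp hw
    have hle : 2 * j + 1 ≤ f w := by omega
    refine ⟨j, hja.symm, ?_, hle⟩
    rw [← hja]
    exact hx w (2 * j) (by omega)
  set C : Finset V := S.biUnion Cw with hCdef
  -- cardinality of C
  have hcardCw : ∀ w ∈ S, (Cw w).card = (f w + 1) / 2 := by
    intro w hw
    rw [hCwdef]
    rw [Finset.card_image_of_injOn, Finset.card_range]
    intro j hj j' hj' hjj'
    simp only [Finset.mem_coe, Finset.mem_range] at hj hj'
    have hfw : 1 ≤ f w := (hSmem w).mp hw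
    have h1 : G.dist w (x w (2 * j)) = 2 * j := hx w _ (by omega)
    have h2 : G.dist w (x w (2 * j')) = 2 * j' := hx w _ (by omega)
    simp only at hjj'
    rw [hjj'] at h1
    omega
  have hdisj : ∀ w ∈ S, ∀ w' ∈ S, w ≠ w' → Disjoint (Cw w) (Cw w') := by
    intro w hw w' hw' hne'
    rw [Finset.disjoint_left]
    intro a ha ha'
    obtain ⟨j, _, hd, hle⟩ := hCmem w hw a ha
    obtain ⟨j', _, hd', hle'⟩ := hCmem w' hw' a ha'
    have htr : G.dist w w' ≤ G.dist w a + G.dist a w' := hG.dist_triangle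
    have hcm : G.dist a w' = G.dist w' a := SimpleGraph.dist_comm
    have := hdistS w hw w' hw' hne'
    omega
  have hcardC : C.card = ∑ w ∈ S, ((f w + 1) / 2) := by
    rw [hCdef, Finset.card_biUnion]
    · exact Finset.sum_congr rfl hcardCw
    · intro w hw w' hw' hne'
      exact hdisj w hw w' hw' hne'
  -- independence of C
  have hCindep : ∀ a ∈ C, ∀ b ∈ C, a ≠ b → ¬ G.Adj a b := by
    intro a ha b hb hab hadj
    rw [hCdef, Finset.mem_biUnion] at ha hb
    obtain ⟨w, hw, haw⟩ := ha
    obtain ⟨w', hw', hbw⟩ := hb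
    obtain ⟨j, hja, hd, hle⟩ := hCmem w hw a haw
    obtain ⟨j', hjb, hd', hle'⟩ := hCmem w' hw' b hbw
    have hd1 : G.dist a b = 1 := aux_adj_dist hadj
    by_cases hww' : w = w'
    · subst hww'
      have h1 : G.dist w b ≤ G.dist w a + G.dist a b := hG.dist_triangle
      have h2 : G.dist w a ≤ G.dist w b + G.dist b a := hG.dist_triangle
      have h3 : G.dist b a = 1 := aux_adj_dist hadj.symm
      have hjj' : j = j' := by omega
      rw [hja, hjb, hjj'] at hab
      exact hab rfl
    · have h1 : G.dist w w' ≤ G.dist w a + G.dist a w' := hG.dist_triangle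
      have h2 : G.dist a w' ≤ G.dist a b + G.dist b w' := hG.dist_triangle
      have h3 : G.dist b w' = G.dist w' b := SimpleGraph.dist_comm
      have := hdistS w hw w' hw' hww'
      omega
  -- the support sum
  have hsum : ∑ v, f v = ∑ w ∈ S, f w := by
    rw [hSdef]
    rw [Finset.sum_filter_of_ne]
    intro w _ hw
    omega
  by_cases hodd : ∀ w ∈ S, f w % 2 = 0
  · -- all even: add an extra vertex z
    set z : V := x u0 (f u0) with hzdef
    have hdz : G.dist u0 z = f u0 := hx u0 (f u0) le_rfl
    have hu0S : u0 ∈ S := (hSmem u0).mpr hu0'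
    have hzC : z ∉ C := by
      intro hz
      rw [hCdef, Finset.mem_biUnion] at hz
      obtain ⟨w, hw, hzw⟩ := hz
      obtain ⟨j, hja, hd, hle⟩ := hCmem w hw z hzw
      have hev := hodd w hw
      by_cases hwu : w = u0
      · subst hwu; omega
      · have h1 : G.dist u0 w ≤ G.dist u0 z + G.dist z w := hG.dist_triangle
        have h2 : G.dist z w = G.dist w z := SimpleGraph.dist_comm
        have := hdistS u0 hu0S w hw (fun h => hwu h.symm)
        omega
    have hznadj : ∀ b ∈ C, ¬ G.Adj z b := by
      intro b hb hadj
      rw [hCdef, Finset.mem_biUnion] at hb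
      obtain ⟨w, hw, hbw⟩ := hb
      obtain ⟨j, hjb, hd, hle⟩ := hCmem w hw b hbw
      have hev := hodd w hw
      have hd1 : G.dist z b = 1 := aux_adj_dist hadj
      by_cases hwu : w = u0
      · subst hwu
        have h1 : G.dist w z ≤ G.dist w b + G.dist b z := hG.dist_triangle
        have h2 : G.dist b z = 1 := aux_adj_dist hadj.symm
        omega
      · have h1 : G.dist u0 w ≤ G.dist u0 z + G.dist z w := hG.dist_triangle
        have h2 : G.dist z w ≤ G.dist z b + G.dist b w := hG.dist_triangle
        have h3 : G.dist b w = G.dist w b := SimpleGraph.dist_comm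
        have := hdistS u0 hu0S w hw (fun h => hwu h.symm)
        omega
    set s : Finset V := insert z C with hsdef
    have hsindep : ∀ a ∈ s, ∀ b ∈ s, a ≠ b → ¬ G.Adj a b := by
      intro a ha b hb hab
      rw [hsdef, Finset.mem_insert] at ha hb
      rcases ha with ha | ha
      · rcases hb with hb | hb
        · subst ha; subst hb; exact absurd rfl hab
        · subst ha; exact hznadj b hb
      · rcases hb with hb | hb
        · subst hb
          intro hadj
          exact hznadj a ha hadj.symm
        · exact hCindep a ha b hb hab
    have hcards : s.card = C.card + 1 := by
      rw [hsdef, Finset.card_insert_of_notMem hzC]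
    have hcard2 : ∑ v, f v < 2 * s.card := by
      rw [hcards, hcardC, hsum]
      have h2m : ∀ w ∈ S, f w ≤ 2 * ((f w + 1) / 2) := by
        intro w hw
        have := (hSmem w).mp hw
        omega
      have : ∑ w ∈ S, f w ≤ ∑ w ∈ S, 2 * ((f w + 1) / 2) := Finset.sum_le_sum h2m
      rw [← Finset.mul_sum] at this
      omega
    have := aux_card_le_indepNum G s hsindep
    omega
  · -- some odd weight: C itself suffices
    push_neg at hodd
    obtain ⟨w0, hw0S, hw0odd⟩ := hodd
    have hcard2 : ∑ v, f v < 2 * C.card := by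
      rw [hcardC, hsum]
      have hlt : ∑ w ∈ S, f w < ∑ w ∈ S, 2 * ((f w + 1) / 2) := by
        apply Finset.sum_lt_sum
        · intro w hw
          have := (hSmem w).mp hw
          omega
        · refine ⟨w0, hw0S, ?_⟩
          have := (hSmem w0).mp hw0S
          omega
      rw [← Finset.mul_sum] at hlt
      omega
    have := aux_card_le_indepNum G C hCindep
    omega

end Main

theorem alphaBn_lt_two_mul_indepNum {V : Type*} [Fintype V]
    (G : SimpleGraph V) (hG : G.Connected) :
    alphaBn G < 2 * _root_.indepNum G := by
  classical
  have hbdd : BddAbove {k | ∃ f : V → ℕ, IsBnIndep G f ∧ ∑ v, f v = k} := by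
    refine ⟨∑ v, ecc G v, fun k hk => ?_⟩
    obtain ⟨f, hf, hfk⟩ := hk
    rw [← hfk]
    exact Finset.sum_le_sum fun v _ => hf.1 v
  have hne : {k | ∃ f : V → ℕ, IsBnIndep G f ∧ ∑ v, f v = k}.Nonempty := by
    refine ⟨0, fun _ => 0, ⟨fun v => Nat.zero_le _, fun u v _ h1 _ => by simp at h1⟩, by simp⟩
  have hmem := Nat.sSup_mem hne hbdd
  obtain ⟨f, hf, hfk⟩ := hmem
  rw [alphaBn, ← hfk]
  exact aux_key G hG f hf
end

section
/- For any connected graph G of order n, α_bn(G) ≤ n − δ(G). -/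
open SimpleGraph Finset

lemma walk_dist_getVert_le {V : Type*} {G : SimpleGraph V} (hG : G.Connected) {u v : V}
    (p : G.Walk u v) (i : ℕ) : G.dist u (p.getVert i) ≤ i := by
  induction p generalizing i with
  | nil => simp [SimpleGraph.Walk.getVert, SimpleGraph.dist_self]
  | @cons a b c h q ih =>
    cases i with
    | zero => simp [SimpleGraph.Walk.getVert, SimpleGraph.dist_self]
    | succ n =>
      have h1 : G.dist a (q.getVert n) ≤ G.dist a b + G.dist b (q.getVert n) :=
        hG.dist_triangle
      have h2 : G.dist a b ≤ 1 := SimpleGraph.dist_le (SimpleGraph.Walk.cons h SimpleGraph.Walk.nil)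
      have h3 := ih n
      have : (SimpleGraph.Walk.cons h q).getVert (n+1) = q.getVert n := rfl
      rw [this]
      omega

lemma dist_getVert_eq {V : Type*} {G : SimpleGraph V} (hG : G.Connected) {u v : V}
    (p : G.Walk u v) (hp : p.length = G.dist u v) {i : ℕ} (hi : i ≤ p.length) :
    G.dist u (p.getVert i) = i := by
  have hle := walk_dist_getVert_le hG p i
  have hrev : p.reverse.getVert (p.length - i) = p.getVert i := by
    rw [SimpleGraph.Walk.getVert_reverse]
    congr 1
    omega
  have h2 : G.dist v (p.getVert i) ≤ p.length - i := by
    have := walk_dist_getVert_le hG p.reverse (p.length - i)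
    rwa [hrev] at this
  have h3 : G.dist u v ≤ G.dist u (p.getVert i) + G.dist (p.getVert i) v :=
    hG.dist_triangle
  rw [SimpleGraph.dist_comm (u := p.getVert i)] at h3
  omega

lemma sum_bnIndep_le {V : Type*} [Fintype V] (G : SimpleGraph V) [DecidableRel G.Adj]
    (hG : G.Connected) (f : V → ℕ) (hf : IsBnIndep G f) :
    ∑ v, f v + G.minDegree ≤ Fintype.card V := by
  classical
  by_cases hz : ∀ v, f v = 0
  · have : ∑ v, f v = 0 := Finset.sum_eq_zero fun v _ => hz v
    rw [this, zero_add]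
    have : Nonempty V := hG.nonempty
    obtain ⟨v⟩ := this
    have h1 : G.minDegree ≤ G.degree v := G.minDegree_le_degree v
    have h2 : G.degree v < Fintype.card V := G.degree_lt_card_verts v
    omega
  · push_neg at hz
    obtain ⟨v0, hv0'⟩ := hz
    have hv0 : 1 ≤ f v0 := Nat.one_le_iff_ne_zero.mpr hv0'
    -- far vertex existence
    have hfar : ∀ v, 1 ≤ f v → ∃ u, f v ≤ G.dist v u := by
      intro v hv
      have h1 : f v ≤ Finset.univ.sup fun u => G.dist v u := hf.1 v
      have h2 := (Finset.le_sup_iff (show (⊥ : ℕ) < f v from hv)).mp h1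
      obtain ⟨u, _, hu⟩ := h2
      exact ⟨u, hu⟩
    set T : Finset V := Finset.univ.filter (fun v => 1 ≤ f v) with hT
    have hT0 : v0 ∈ T := by simp [hT, hv0]
    set S : V → Finset V := fun v => if v = v0 then Finset.univ.filter (fun x => G.dist v0 x ≤ f v0)
      else Finset.univ.filter (fun x => G.dist v x < f v) with hS
    -- membership characterizations
    have hmem : ∀ v x, v ∈ T → x ∈ S v → (G.dist v x ≤ f v ∧ (v ≠ v0 → G.dist v x < f v)) := by
      intro v x hvT hx
      by_cases hv : v = v0
      · subst hv
        simp only [hS, if_pos rfl, Finset.mem_filter] at hx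
        exact ⟨hx.2, fun h => absurd rfl h⟩
      · simp only [hS, if_neg hv, Finset.mem_filter] at hx
        exact ⟨le_of_lt hx.2, fun _ => hx.2⟩
    -- pairwise disjoint
    have hdisj : ∀ u ∈ T, ∀ v ∈ T, u ≠ v → Disjoint (S u) (S v) := by
      intro u hu v hv huv
      rw [Finset.disjoint_left]
      intro x hxu hxv
      have h1 := hmem u x hu hxu
      have h2 := hmem v x hv hxv
      have hfu : 1 ≤ f u := (Finset.mem_filter.mp hu).2
      have hfv : 1 ≤ f v := (Finset.mem_filter.mp hv).2
      have hind : f u + f v ≤ G.dist u v := hf.2 u v huv hfu hfv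
      have htri : G.dist u v ≤ G.dist u x + G.dist x v := hG.dist_triangle
      rw [SimpleGraph.dist_comm (u := x)] at htri
      by_cases h : u = v0
      · have hvne : v ≠ v0 := fun hh => huv (h.trans hh.symm)
        have := h2.2 hvne
        omega
      · have := h1.2 h
        omega
    -- cardinality bound for v ≠ v0
    have hcard1 : ∀ v ∈ T, v ≠ v0 → f v ≤ (S v).card := by
      intro v hvT hvne
      have hfv : 1 ≤ f v := (Finset.mem_filter.mp hvT).2
      obtain ⟨u, hu⟩ := hfar v hfv
      obtain ⟨p, hp⟩ := hG.exists_walk_length_eq_dist v u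
      have hdlen : f v ≤ p.length := by omega
      have hdg : ∀ i ∈ Finset.range (f v), G.dist v (p.getVert i) = i := by
        intro i hi
        rw [Finset.mem_range] at hi
        exact dist_getVert_eq hG p hp (by omega)
      have himg : (Finset.range (f v)).image p.getVert ⊆ S v := by
        intro x hx
        simp only [Finset.mem_image, Finset.mem_range] at hx
        obtain ⟨i, hi, rfl⟩ := hx
        have hd := hdg i (Finset.mem_range.mpr hi)
        simp only [hS, if_neg hvne, Finset.mem_filter, Finset.mem_univ, true_and]
        omega
      have hinj : Set.InjOn p.getVert (Finset.range (f v)) := by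
        intro i hi j hj hij
        have h1 := hdg i (by simpa using hi)
        have h2 := hdg j (by simpa using hj)
        rw [hij] at h1
        omega
      calc f v = ((Finset.range (f v)).image p.getVert).card := by
              rw [Finset.card_image_of_injOn hinj, Finset.card_range]
        _ ≤ (S v).card := Finset.card_le_card himg
    -- cardinality bound for v0
    have hcard0 : f v0 + G.minDegree ≤ (S v0).card := by
      obtain ⟨u, hu⟩ := hfar v0 hv0
      obtain ⟨p, hp⟩ := hG.exists_walk_length_eq_dist v0 u
      have hdlen : f v0 ≤ p.length := by omega
      have hdg : ∀ i, i ≤ f v0 → G.dist v0 (p.getVert i) = i := by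
        intro i hi
        exact dist_getVert_eq hG p hp (by omega)
      have hSv0 : S v0 = Finset.univ.filter (fun x => G.dist v0 x ≤ f v0) := by
        simp [hS]
      set A : Finset V := insert v0 (G.neighborFinset v0) with hA
      set B : Finset V := (Finset.Icc 2 (f v0)).image p.getVert with hB
      have hAsub : A ⊆ S v0 := by
        intro x hx
        rw [hSv0, Finset.mem_filter]
        refine ⟨Finset.mem_univ _, ?_⟩
        rw [hA, Finset.mem_insert] at hx
        rcases hx with rfl | hx
        · rw [SimpleGraph.dist_self]; omega
        · rw [SimpleGraph.mem_neighborFinset] at hx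
          have : G.dist v0 x ≤ 1 :=
            SimpleGraph.dist_le (SimpleGraph.Walk.cons hx SimpleGraph.Walk.nil)
          omega
      have hBsub : B ⊆ S v0 := by
        intro x hx
        rw [hB, Finset.mem_image] at hx
        obtain ⟨i, hi, rfl⟩ := hx
        rw [Finset.mem_Icc] at hi
        rw [hSv0, Finset.mem_filter]
        exact ⟨Finset.mem_univ _, by rw [hdg i hi.2]; omega⟩
      have hABdisj : Disjoint A B := by
        rw [Finset.disjoint_left]
        intro x hxA hxB
        have h1 : G.dist v0 x ≤ 1 := by
          rw [hA, Finset.mem_insert] at hxA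
          rcases hxA with rfl | hxA
          · rw [SimpleGraph.dist_self]; omega
          · rw [SimpleGraph.mem_neighborFinset] at hxA
            exact SimpleGraph.dist_le (SimpleGraph.Walk.cons hxA SimpleGraph.Walk.nil)
        rw [hB, Finset.mem_image] at hxB
        obtain ⟨i, hi, rfl⟩ := hxB
        rw [Finset.mem_Icc] at hi
        rw [hdg i hi.2] at h1
        omega
      have hcardA : A.card = G.degree v0 + 1 := by
        rw [hA, Finset.card_insert_of_notMem (by simp), SimpleGraph.card_neighborFinset_eq_degree]
      have hinj0 : Set.InjOn p.getVert (Finset.Icc 2 (f v0)) := by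
        intro i hi j hj hij
        simp only [Finset.coe_Icc, Set.mem_Icc] at hi hj
        have h1 := hdg i hi.2
        have h2 := hdg j hj.2
        rw [hij] at h1
        omega
      have hcardB : B.card = f v0 - 1 := by
        rw [hB, Finset.card_image_of_injOn hinj0, Nat.card_Icc]
        omega
      have hUsub : A ∪ B ⊆ S v0 := Finset.union_subset hAsub hBsub
      have hcardU : (A ∪ B).card = A.card + B.card := Finset.card_union_of_disjoint hABdisj
      have hdeg : G.minDegree ≤ G.degree v0 := G.minDegree_le_degree v0
      have := Finset.card_le_card hUsub
      omega
    -- summation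
    have hsplit : ∀ g : V → ℕ, g v0 + ∑ v ∈ T.erase v0, g v = ∑ v ∈ T, g v := by
      intro g
      exact Finset.add_sum_erase T g hT0
    have hsum1 : ∑ v ∈ T.erase v0, f v ≤ ∑ v ∈ T.erase v0, (S v).card := by
      apply Finset.sum_le_sum
      intro v hv
      exact hcard1 v (Finset.mem_of_mem_erase hv) (Finset.ne_of_mem_erase hv)
    have hbiu : ∑ v ∈ T, (S v).card = (T.biUnion S).card := (Finset.card_biUnion hdisj).symm
    have hle : (T.biUnion S).card ≤ Fintype.card V := by
      rw [← Finset.card_univ]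
      exact Finset.card_le_card (Finset.subset_univ _)
    have hfT : ∑ v, f v = ∑ v ∈ T, f v := by
      rw [hT]
      exact (Finset.sum_filter_of_ne (fun x _ h => by omega)).symm
    have e1 := hsplit f
    have e2 := hsplit (fun v => (S v).card)
    omega

theorem alphaBn_le_order_sub_minDegree {V : Type*} [Fintype V]
    (G : SimpleGraph V) [DecidableRel G.Adj] (hG : G.Connected) :
    alphaBn G ≤ Fintype.card V - G.minDegree := by
  apply csSup_le
  · exact ⟨0, fun _ => 0, ⟨fun v => Nat.zero_le _, fun u v _ h1 _ => by simp at h1⟩, by simp⟩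
  · rintro k ⟨f, hf, rfl⟩
    have := sum_bnIndep_le G hG f hf
    omega
end

section
/- Let G be a connected graph on n ≥ 2 vertices and let C_G = G ⊙ K_1 be the corona of G with K_1 (attach a pendant leaf to each vertex of G). Then α_bn(C_G) = n + α(G). -/
open SimpleGraph Finset

/-- The corona `G ⊙ K₁`: attach a pendant leaf `Sum.inr v` to each vertex `Sum.inl v`. -/
def corona {V : Type*} (G : SimpleGraph V) : SimpleGraph (V ⊕ V) where
  Adj x y :=
    match x, y with
    | Sum.inl u, Sum.inl v => G.Adj u v
    | Sum.inl u, Sum.inr v => u = v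
    | Sum.inr u, Sum.inl v => u = v
    | Sum.inr _, Sum.inr _ => False
  symm := ⟨by
    rintro (u | u) (v | v) h
    · exact G.adj_symm h
    · exact h.symm
    · exact h.symm
    · exact h.elim⟩
  loopless := ⟨by
    rintro (u | u) h
    · exact G.irrefl h
    · exact h.elim⟩

section Basics
variable {V : Type*} (G : SimpleGraph V)

@[simp] lemma corona_adj_inl_inl {u v : V} :
    (corona G).Adj (Sum.inl u) (Sum.inl v) ↔ G.Adj u v := Iff.rfl

@[simp] lemma corona_adj_inl_inr {u v : V} :
    (corona G).Adj (Sum.inl u) (Sum.inr v) ↔ u = v := Iff.rfl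

@[simp] lemma corona_adj_inr_inl {u v : V} :
    (corona G).Adj (Sum.inr u) (Sum.inl v) ↔ u = v := Iff.rfl

@[simp] lemma corona_adj_inr_inr {u v : V} :
    ¬ (corona G).Adj (Sum.inr u) (Sum.inr v) := fun h => h

def inlHom : G →g corona G where
  toFun := Sum.inl
  map_rel' := fun h => h

lemma corona_connected (hG : G.Connected) : (corona G).Connected := by
  have hne : Nonempty V := hG.nonempty
  constructor
  · intro x y
    have key : ∀ u v : V, (corona G).Reachable (Sum.inl u) (Sum.inl v) := by
      intro u v
      exact ((hG u v).map (inlHom G))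
    have leaf : ∀ v : V, (corona G).Reachable (Sum.inr v) (Sum.inl v) := by
      intro v
      exact SimpleGraph.Adj.reachable (by simp)
    rcases x with u | u <;> rcases y with v | v
    · exact key u v
    · exact (key u v).trans (leaf v).symm
    · exact (leaf u).trans (key u v)
    · exact ((leaf u).trans (key u v)).trans (leaf v).symm

/-- projection -/
def cproj : V ⊕ V → V := Sum.elim id id

lemma dist_proj_le (hG : G.Connected) :
    ∀ {x y : V ⊕ V} (W : (corona G).Walk x y), G.dist (cproj x) (cproj y) ≤ W.length := by
  intro x y W
  induction W with
  | nil => simp [cproj]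
  | @cons a b c h W ih =>
    have tri : G.dist (cproj a) (cproj c) ≤ G.dist (cproj a) (cproj b) + G.dist (cproj b) (cproj c) :=
      hG.dist_triangle
    have h1 : G.dist (cproj a) (cproj b) ≤ 1 := by
      rcases a with u | u <;> rcases b with v | v
      · exact le_of_eq (SimpleGraph.dist_eq_one_iff_adj.mpr h)
      · simp only [corona_adj_inl_inr] at h; subst h; simp [cproj, SimpleGraph.dist_self]
      · simp only [corona_adj_inr_inl] at h; subst h; simp [cproj, SimpleGraph.dist_self]
      · exact absurd h (corona_adj_inr_inr G)
    simp only [SimpleGraph.Walk.length_cons]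
    omega

lemma walk_from_inr (hG : G.Connected) {u : V} {y : V ⊕ V}
    (W : (corona G).Walk (Sum.inr u) y) (hy : y ≠ Sum.inr u) :
    G.dist u (cproj y) + 1 ≤ W.length := by
  cases W with
  | nil => exact absurd rfl hy
  | @cons _ b _ h W =>
    rcases b with v | v
    · simp only [corona_adj_inr_inl] at h
      subst h
      have := dist_proj_le G hG W
      simp only [cproj, Sum.elim_inl, id_eq] at this ⊢
      simp only [SimpleGraph.Walk.length_cons]
      omega
    · exact absurd h (corona_adj_inr_inr G)

lemma corona_dist_inl_inl (hG : G.Connected) (u v : V) :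
    (corona G).dist (Sum.inl u) (Sum.inl v) = G.dist u v := by
  apply le_antisymm
  · obtain ⟨W, hW⟩ := (hG u v).exists_walk_length_eq_dist
    calc (corona G).dist (Sum.inl u) (Sum.inl v) ≤ (W.map (inlHom G)).length :=
          SimpleGraph.dist_le _
      _ = G.dist u v := by rw [SimpleGraph.Walk.length_map, hW]
  · obtain ⟨W, hW⟩ := (corona_connected G hG (Sum.inl u) (Sum.inl v)).exists_walk_length_eq_dist
    have := dist_proj_le G hG W
    simpa [cproj, hW] using this

lemma corona_dist_inl_inr (hG : G.Connected) (u v : V) :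
    (corona G).dist (Sum.inl u) (Sum.inr v) = G.dist u v + 1 := by
  apply le_antisymm
  · obtain ⟨W, hW⟩ := (hG u v).exists_walk_length_eq_dist
    have hadj : (corona G).Adj (Sum.inl v) (Sum.inr v) := by simp
    calc (corona G).dist (Sum.inl u) (Sum.inr v)
        ≤ ((W.map (inlHom G)).concat hadj).length := SimpleGraph.dist_le _
      _ = G.dist u v + 1 := by
          exact (SimpleGraph.Walk.length_concat _ _).trans (by rw [SimpleGraph.Walk.length_map, hW])
  · obtain ⟨W, hW⟩ := (corona_connected G hG (Sum.inl u) (Sum.inr v)).exists_walk_length_eq_dist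
    have := walk_from_inr G hG W.reverse (by simp)
    rw [SimpleGraph.Walk.length_reverse, hW] at this
    simpa [cproj, SimpleGraph.dist_comm] using this

lemma corona_dist_inr_inr (hG : G.Connected) {u v : V} (huv : u ≠ v) :
    (corona G).dist (Sum.inr u) (Sum.inr v) = G.dist u v + 2 := by
  apply le_antisymm
  · have hadj : (corona G).Adj (Sum.inr u) (Sum.inl u) := by simp
    have tri := (corona_connected G hG).dist_triangle
      (u := Sum.inr u) (v := Sum.inl u) (w := Sum.inr v)
    have h1 : (corona G).dist (Sum.inr u) (Sum.inl u) = 1 :=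
      SimpleGraph.dist_eq_one_iff_adj.mpr hadj
    rw [h1, corona_dist_inl_inr G hG] at tri
    omega
  · obtain ⟨W, hW⟩ := (corona_connected G hG (Sum.inr u) (Sum.inr v)).exists_walk_length_eq_dist
    cases W with
    | nil => exact absurd rfl huv
    | @cons _ b _ h W' =>
      rcases b with w | w
      · simp only [corona_adj_inr_inl] at h
        subst h
        have := walk_from_inr G hG W'.reverse (by simp)
        rw [SimpleGraph.Walk.length_reverse] at this
        simp only [SimpleGraph.Walk.length_cons] at hW
        simp only [cproj, Sum.elim_inl, id_eq] at this
        rw [SimpleGraph.dist_comm] at this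
        omega
      · exact absurd h (corona_adj_inr_inr G)

end Basics

section Ecc
variable {V : Type*} [Fintype V] (G : SimpleGraph V)

lemma dist_le_ecc (v u : V) : G.dist v u ≤ ecc G v :=
  Finset.le_sup (Finset.mem_univ u)

lemma ecc_corona_inl_le (hG : G.Connected) (v : V) :
    ecc (corona G) (Sum.inl v) ≤ ecc G v + 1 := by
  apply Finset.sup_le
  intro x _
  rcases x with u | u
  · rw [corona_dist_inl_inl G hG]
    exact le_trans (dist_le_ecc G v u) (Nat.le_succ _)
  · rw [corona_dist_inl_inr G hG]
    exact Nat.add_le_add_right (dist_le_ecc G v u) 1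

lemma ecc_corona_inr_le (hG : G.Connected) (v : V) :
    ecc (corona G) (Sum.inr v) ≤ ecc G v + 2 := by
  apply Finset.sup_le
  intro x _
  rcases x with u | u
  · rw [SimpleGraph.dist_comm, corona_dist_inl_inr G hG, SimpleGraph.dist_comm]
    exact le_trans (Nat.add_le_add_right (dist_le_ecc G v u) 1) (by omega)
  · by_cases huv : v = u
    · subst huv; simp [SimpleGraph.dist_self]
    · rw [corona_dist_inr_inr G hG huv]
      exact Nat.add_le_add_right (dist_le_ecc G v u) 2

lemma two_le_ecc_corona_inr (hG : G.Connected) (hn : 2 ≤ Fintype.card V) (v : V) :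
    2 ≤ ecc (corona G) (Sum.inr v) := by
  obtain ⟨u, huv⟩ := Fintype.exists_ne_of_one_lt_card (by omega) v
  have h1 : 1 ≤ G.dist v u := hG.pos_dist_of_ne (Ne.symm huv)
  have : (corona G).dist (Sum.inr v) (Sum.inl u) = G.dist u v + 1 := by
    rw [SimpleGraph.dist_comm, corona_dist_inl_inr G hG]
  have h2 := dist_le_ecc (corona G) (Sum.inr v) (Sum.inl u)
  rw [this] at h2
  rw [SimpleGraph.dist_comm] at h1
  omega

end Ecc

section Geodesic
variable {V : Type*} (G : SimpleGraph V)

lemma dist_to_getVert_le (hG : G.Connected) :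
    ∀ {x y : V} (W : G.Walk x y) (i : ℕ), G.dist x (W.getVert i) ≤ i := by
  intro x y W
  induction W with
  | nil => intro i; exact le_trans (le_of_eq SimpleGraph.dist_self) (Nat.zero_le i)
  | @cons a b c h W ih =>
    intro i
    cases i with
    | zero => simp [SimpleGraph.dist_self]
    | succ i =>
      have tri : G.dist a ((W.cons h).getVert (i+1)) ≤
          G.dist a b + G.dist b (W.getVert i) := by
        rw [SimpleGraph.Walk.getVert_cons_succ]
        exact hG.dist_triangle
      have h1 : G.dist a b = 1 := SimpleGraph.dist_eq_one_iff_adj.mpr h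
      have := ih i
      omega

lemma getVert_to_end_le :
    ∀ {x y : V} (W : G.Walk x y) (i : ℕ), G.dist (W.getVert i) y ≤ W.length - i := by
  intro x y W
  induction W with
  | nil => intro i; exact le_trans (le_of_eq SimpleGraph.dist_self) (Nat.zero_le _)
  | @cons a b c h W ih =>
    intro i
    cases i with
    | zero =>
      simpa using SimpleGraph.dist_le (W.cons h)
    | succ i =>
      rw [SimpleGraph.Walk.getVert_cons_succ]
      simpa using ih i

lemma geodesic_getVert (hG : G.Connected) {x y : V} (W : G.Walk x y)
    (hW : W.length = G.dist x y) {i : ℕ} (hi : i ≤ W.length) :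
    G.dist x (W.getVert i) = i := by
  have h1 := dist_to_getVert_le G hG W i
  have h2 := getVert_to_end_le G W i
  have tri : G.dist x y ≤ G.dist x (W.getVert i) + G.dist (W.getVert i) y :=
    hG.dist_triangle
  omega

end Geodesic

section Core
variable {V : Type*} [Fintype V] (G : SimpleGraph V)

lemma indep_card_le (s : Finset V)
    (h : ∀ u ∈ s, ∀ v ∈ s, u ≠ v → ¬ G.Adj u v) : s.card ≤ _root_.indepNum G :=
  le_csSup ⟨Fintype.card V, by rintro k ⟨t, -, rfl⟩; exact Finset.card_le_univ t⟩ ⟨s, h, rfl⟩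

lemma one_le_indepNum [Nonempty V] : 1 ≤ _root_.indepNum G := by
  classical
  have := indep_card_le G {Classical.arbitrary V} (by simp)
  simpa using this

lemma core (hG : G.Connected) (A : Finset V) (g ε : V → ℕ)
    (hε : ∀ v ∈ A, ε v ≤ 1)
    (hecc : ∀ v ∈ A, g v ≤ ecc G v + 1)
    (hpair : ∀ u ∈ A, ∀ v ∈ A, u ≠ v → g u + g v ≤ G.dist u v) :
    ∑ v ∈ A, (g v + ε v) ≤ Fintype.card V + _root_.indepNum G := by
  classical
  have hne : Nonempty V := hG.nonempty
  -- choose geodesics to eccentric vertices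
  have hch : ∀ v : V, ∃ (u : V) (hu : True) (Wv : G.Walk v u),
      Wv.length = G.dist v u ∧ Wv.length = ecc G v := by
    intro v
    obtain ⟨u, -, hu⟩ := Finset.exists_mem_eq_sup (Finset.univ : Finset V)
      Finset.univ_nonempty (fun u => G.dist v u)
    obtain ⟨Wv, hWv⟩ := (hG v u).exists_walk_length_eq_dist
    exact ⟨u, trivial, Wv, hWv, by rw [hWv, ← hu]; rfl⟩
  choose w _ W hW1 hW2 using hch
  -- distance to the i-th vertex of the geodesic
  have hdist : ∀ (v : V) (i : ℕ), i ≤ ecc G v → G.dist v ((W v).getVert i) = i := by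
    intro v i hi
    exact geodesic_getVert G hG (W v) (hW1 v) (by rw [hW2 v]; exact hi)
  set S : V → Finset V := fun v => insert v ((Finset.range (g v)).image (W v).getVert)
    with hS
  set I : V → Finset V := fun v =>
    (Finset.range ((g v + 1) / 2)).image (fun t => (W v).getVert (2 * t)) with hI
  -- dist bound for members of S v
  have hSdist : ∀ v ∈ A, ∀ x ∈ S v, G.dist v x ≤ g v - 1 := by
    intro v hv x hx
    rw [hS] at hx
    simp only [Finset.mem_insert, Finset.mem_image, Finset.mem_range] at hx
    rcases hx with rfl | ⟨i, hi, rfl⟩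
    · rw [SimpleGraph.dist_self]; exact Nat.zero_le _
    · have hgv := hecc v hv
      rw [hdist v i (by omega)]
      omega
  have hIdist : ∀ v ∈ A, ∀ x ∈ I v, G.dist v x ≤ g v - 1 := by
    intro v hv x hx
    rw [hI] at hx
    simp only [Finset.mem_image, Finset.mem_range] at hx
    obtain ⟨t, ht, rfl⟩ := hx
    have hgv := hecc v hv
    rw [hdist v (2*t) (by omega)]
    omega
  have hIpos : ∀ v ∈ A, ∀ x ∈ I v, 1 ≤ g v := by
    intro v hv x hx
    rw [hI] at hx
    simp only [Finset.mem_image, Finset.mem_range] at hx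
    obtain ⟨t, ht, rfl⟩ := hx
    omega
  -- cardinalities
  have hScard : ∀ v ∈ A, g v ≤ (S v).card ∧ 1 ≤ (S v).card := by
    intro v hv
    have hgv := hecc v hv
    have hinj : Set.InjOn (W v).getVert (Finset.range (g v)) := by
      intro i hi j hj hij
      simp only [Finset.coe_range, Set.mem_Iio] at hi hj
      have di := hdist v i (by omega)
      have dj := hdist v j (by omega)
      rw [hij] at di
      omega
    have hcard : ((Finset.range (g v)).image (W v).getVert).card = g v := by
      rw [Finset.card_image_of_injOn hinj, Finset.card_range]
    constructor
    · calc g v = ((Finset.range (g v)).image (W v).getVert).card := hcard.symm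
        _ ≤ (S v).card := Finset.card_le_card (by rw [hS]; exact Finset.subset_insert _ _)
    · have hv' : v ∈ S v := by simp only [hS]; exact Finset.mem_insert_self _ _
      exact Finset.card_pos.mpr ⟨v, hv'⟩
  have hIcard : ∀ v ∈ A, (I v).card = (g v + 1) / 2 := by
    intro v hv
    have hgv := hecc v hv
    have hinj : Set.InjOn (fun t => (W v).getVert (2*t)) (Finset.range ((g v + 1)/2)) := by
      intro i hi j hj hij
      simp only [Finset.coe_range, Set.mem_Iio] at hi hj
      have di := hdist v (2*i) (by omega)
      have dj := hdist v (2*j) (by omega)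
      simp only at hij
      rw [hij] at di
      omega
    rw [hI]
    rw [Finset.card_image_of_injOn hinj, Finset.card_range]
  have hIS : ∀ v, I v ⊆ S v := by
    intro v x hx
    rw [hI] at hx
    simp only [Finset.mem_image, Finset.mem_range] at hx
    obtain ⟨t, ht, rfl⟩ := hx
    rw [hS]
    apply Finset.mem_insert_of_mem
    exact Finset.mem_image.mpr ⟨2*t, Finset.mem_range.mpr (by omega), rfl⟩
  -- disjointness of the S v
  have hSdisj : ∀ u ∈ A, ∀ v ∈ A, u ≠ v → Disjoint (S u) (S v) := by
    intro u hu v hv huv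
    rw [Finset.disjoint_left]
    intro x hxu hxv
    have d1 := hSdist u hu x hxu
    have d2 := hSdist v hv x hxv
    have tri : G.dist u v ≤ G.dist u x + G.dist x v := hG.dist_triangle
    rw [SimpleGraph.dist_comm (u := x)] at tri
    have hp := hpair u hu v hv huv
    have hd : 1 ≤ G.dist u v := hG.pos_dist_of_ne huv
    omega
  -- the union of the S v has at most card V elements
  have hsumS : ∑ v ∈ A, (S v).card ≤ Fintype.card V := by
    rw [← Finset.card_biUnion hSdisj]
    exact Finset.card_le_univ _
  -- the union of the I v is independent
  have hindep : ∀ x ∈ A.biUnion I, ∀ y ∈ A.biUnion I, x ≠ y → ¬ G.Adj x y := by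
    intro x hx y hy hxy hadj
    have hd1 : G.dist x y = 1 := SimpleGraph.dist_eq_one_iff_adj.mpr hadj
    simp only [Finset.mem_biUnion] at hx hy
    obtain ⟨u, hu, hxu⟩ := hx
    obtain ⟨v, hv, hyv⟩ := hy
    by_cases huv : u = v
    · subst huv
      -- both on the same geodesic at even distances
      rw [hI] at hxu hyv
      simp only [Finset.mem_image, Finset.mem_range] at hxu hyv
      obtain ⟨s, hs, rfl⟩ := hxu
      obtain ⟨t, ht, rfl⟩ := hyv
      have hgv := hecc u hu
      have ds := hdist u (2*s) (by omega)
      have dt := hdist u (2*t) (by omega)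
      have tri1 : G.dist u ((W u).getVert (2*t)) ≤
          G.dist u ((W u).getVert (2*s)) + 1 := by
        have := hG.dist_triangle (u := u) (v := (W u).getVert (2*s)) (w := (W u).getVert (2*t))
        omega
      have tri2 : G.dist u ((W u).getVert (2*s)) ≤
          G.dist u ((W u).getVert (2*t)) + 1 := by
        have := hG.dist_triangle (u := u) (v := (W u).getVert (2*t)) (w := (W u).getVert (2*s))
        rw [SimpleGraph.dist_comm (u := (W u).getVert (2*t))] at this
        omega
      have hst : s ≠ t := by rintro rfl; exact hxy rfl
      omega
    · have d1 := hIdist u hu x hxu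
      have d2 := hIdist v hv y hyv
      have g1 := hIpos u hu x hxu
      have g2 := hIpos v hv y hyv
      have hp := hpair u hu v hv huv
      have triA : G.dist u v ≤ G.dist u x + G.dist x v := hG.dist_triangle
      have triB : G.dist x v ≤ G.dist x y + G.dist y v := hG.dist_triangle
      rw [SimpleGraph.dist_comm] at d2
      omega
  have hIdisj : ∀ u ∈ A, ∀ v ∈ A, u ≠ v → Disjoint (I u) (I v) := by
    intro u hu v hv huv
    exact Finset.disjoint_of_subset_left (hIS u)
      (Finset.disjoint_of_subset_right (hIS v) (hSdisj u hu v hv huv))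
  have hsumI : ∑ v ∈ A, (g v + 1) / 2 ≤ _root_.indepNum G := by
    have h1 : ∑ v ∈ A, (I v).card = (A.biUnion I).card := (Finset.card_biUnion hIdisj).symm
    have h2 : (A.biUnion I).card ≤ _root_.indepNum G := indep_card_le G _ hindep
    calc ∑ v ∈ A, (g v + 1) / 2 = ∑ v ∈ A, (I v).card :=
          Finset.sum_congr rfl (fun v hv => (hIcard v hv).symm)
      _ ≤ _root_.indepNum G := h1 ▸ h2
  -- final assembly
  calc ∑ v ∈ A, (g v + ε v) ≤ ∑ v ∈ A, ((S v).card + (g v + 1) / 2) := by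
        apply Finset.sum_le_sum
        intro v hv
        have h1 := hScard v hv
        have h2 := hε v hv
        omega
    _ = ∑ v ∈ A, (S v).card + ∑ v ∈ A, (g v + 1) / 2 := Finset.sum_add_distrib
    _ ≤ Fintype.card V + _root_.indepNum G := Nat.add_le_add hsumS hsumI

end Core


theorem alphaBn_corona {V : Type*} [Fintype V]
    (G : SimpleGraph V) (hG : G.Connected) (hn : 2 ≤ Fintype.card V) :
    alphaBn (corona G) = Fintype.card V + _root_.indepNum G := by
  classical
  have hne : Nonempty V := hG.nonempty
  apply le_antisymm
  · -- upper bound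
    apply csSup_le
    · exact ⟨0, fun _ => 0, ⟨fun v => Nat.zero_le _,
        fun u v _ h1 _ => absurd h1 (by simp)⟩, by simp⟩
    · rintro k ⟨f, ⟨hb, hbn⟩, rfl⟩
      have hexcl : ∀ v : V, f (Sum.inl v) = 0 ∨ f (Sum.inr v) = 0 := by
        intro v
        by_contra h
        push_neg at h
        have hd := hbn (Sum.inl v) (Sum.inr v) (by simp) (by omega) (by omega)
        rw [corona_dist_inl_inr G hG, SimpleGraph.dist_self] at hd
        omega
      set ε : V → ℕ := fun v => if f (Sum.inr v) = 0 then 0 else 1 with hεdef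
      set g : V → ℕ := fun v => f (Sum.inl v) + f (Sum.inr v) - ε v with hgdef
      have hεfact : ∀ v : V, (f (Sum.inr v) = 0 ∧ ε v = 0) ∨
          (1 ≤ f (Sum.inr v) ∧ ε v = 1) := by
        intro v
        by_cases h : f (Sum.inr v) = 0
        · left; exact ⟨h, by simp [hεdef, h]⟩
        · right; exact ⟨by omega, by simp [hεdef, h]⟩
      have hgfact : ∀ v : V, g v = f (Sum.inl v) + f (Sum.inr v) - ε v := fun v => rfl
      set A : Finset V := Finset.univ.filter
        (fun v => 1 ≤ f (Sum.inl v) + f (Sum.inr v)) with hA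
      have hmem : ∀ v ∈ A, 1 ≤ f (Sum.inl v) + f (Sum.inr v) := by
        intro v hv
        simp only [hA, Finset.mem_filter] at hv
        exact hv.2
      have hsum : ∑ v ∈ A, (g v + ε v) = ∑ x : V ⊕ V, f x := by
        rw [Fintype.sum_sum_type, ← Finset.sum_add_distrib]
        have hpoint : ∀ v : V, g v + ε v = f (Sum.inl v) + f (Sum.inr v) := by
          intro v
          have := hεfact v
          have := hgfact v
          omega
        rw [Finset.sum_congr rfl (fun v _ => hpoint v)]
        apply Finset.sum_subset (Finset.subset_univ A)
        intro v _ hv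
        simp only [hA, Finset.mem_filter, Finset.mem_univ, true_and, not_le] at hv
        omega
      rw [← hsum]
      apply core G hG A g ε
      · intro v _
        have := hεfact v
        omega
      · intro v _
        have h1 := hb (Sum.inl v)
        have h2 := hb (Sum.inr v)
        have h3 := ecc_corona_inl_le G hG v
        have h4 := ecc_corona_inr_le G hG v
        have h5 := hexcl v
        have := hεfact v
        have := hgfact v
        omega
      · intro u hu v hv huv
        have hmu := hmem u hu
        have hmv := hmem v hv
        have hεu := hεfact u
        have hεv := hεfact v
        have hgu := hgfact u
        have hgv := hgfact v
        rcases hexcl u with h1 | h1 <;> rcases hexcl v with h2 | h2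
        · -- both broadcast from leaves
          have hd := hbn (Sum.inr u) (Sum.inr v) (by simp [huv]) (by omega) (by omega)
          rw [corona_dist_inr_inr G hG huv] at hd
          omega
        · -- u leaf, v base
          have hd := hbn (Sum.inr u) (Sum.inl v) (by simp) (by omega) (by omega)
          rw [SimpleGraph.dist_comm, corona_dist_inl_inr G hG,
            SimpleGraph.dist_comm] at hd
          omega
        · -- u base, v leaf
          have hd := hbn (Sum.inl u) (Sum.inr v) (by simp) (by omega) (by omega)
          rw [corona_dist_inl_inr G hG] at hd
          omega
        · -- both base
          have hd := hbn (Sum.inl u) (Sum.inl v) (by simp [huv]) (by omega) (by omega)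
          rw [corona_dist_inl_inl G hG] at hd
          omega
  · -- lower bound
    have hK : _root_.indepNum G ∈ {k | ∃ s : Finset V,
        (∀ u ∈ s, ∀ v ∈ s, u ≠ v → ¬ G.Adj u v) ∧ s.card = k} := by
      apply Nat.sSup_mem
      · exact ⟨0, ∅, by simp⟩
      · exact ⟨Fintype.card V, by rintro k ⟨t, -, rfl⟩; exact Finset.card_le_univ t⟩
    obtain ⟨s, hs, hcard⟩ := hK
    set f : V ⊕ V → ℕ :=
      Sum.elim (fun _ => 0) (fun v => if v ∈ s then 2 else 1) with hfdef
    apply le_csSup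
    · exact ⟨∑ x, ecc (corona G) x, by
        rintro k ⟨f', ⟨hb', -⟩, rfl⟩
        exact Finset.sum_le_sum (fun x _ => hb' x)⟩
    · refine ⟨f, ⟨?_, ?_⟩, ?_⟩
      · intro x
        rcases x with v | v
        · exact Nat.zero_le _
        · have h2 := two_le_ecc_corona_inr G hG hn v
          simp only [hfdef, Sum.elim_inr]
          split <;> omega
      · rintro (u | u) y hxy h1 h2
        · simp [hfdef] at h1
        rcases y with v | v
        · simp [hfdef] at h2
        have huv : u ≠ v := fun h => hxy (by rw [h])
        rw [corona_dist_inr_inr G hG huv]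
        have hd1 : 1 ≤ G.dist u v := hG.pos_dist_of_ne huv
        simp only [hfdef, Sum.elim_inr]
        by_cases hu : u ∈ s <;> by_cases hv : v ∈ s
        · have hna : ¬ G.Adj u v := hs u hu v hv huv
          have hne1 : G.dist u v ≠ 1 := fun h =>
            hna (SimpleGraph.dist_eq_one_iff_adj.mp h)
          rw [if_pos hu, if_pos hv]
          omega
        · rw [if_pos hu, if_neg hv]; omega
        · rw [if_neg hu, if_pos hv]; omega
        · rw [if_neg hu, if_neg hv]; omega
      · rw [Fintype.sum_sum_type]
        simp only [hfdef, Sum.elim_inl, Sum.elim_inr, Finset.sum_const_zero, zero_add]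
        have hpt : ∀ v : V, (if v ∈ s then 2 else 1) = 1 + (if v ∈ s then 1 else 0) := by
          intro v; split <;> rfl
        rw [Finset.sum_congr rfl (fun v _ => hpt v), Finset.sum_add_distrib,
          Finset.sum_const, smul_eq_mul, mul_one, Finset.sum_ite_mem,
          Finset.univ_inter, Finset.sum_const, smul_eq_mul, mul_one,
          hcard, Finset.card_univ]
end

section
/- For the path P_n on n ≥ 2 vertices, α_bn(P_n) = n − 1: the broadcast assigning strength n−1 to one endpoint is boundary independent of cost n−1, and no boundary independent broadcast has greater cost. -/
open SimpleGraph Finset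

lemma pg_walk_len {n : ℕ} {u v : Fin n} (w : (pathGraph n).Walk u v) :
    max u.val v.val - min u.val v.val ≤ w.length := by
  induction w with
  | nil => simp
  | @cons a b c h p ih =>
    rw [pathGraph_adj] at h
    rw [SimpleGraph.Walk.length_cons]
    omega

lemma pg_dist_le_aux {n : ℕ} (hn : 0 < n) :
    ∀ k : ℕ, ∀ u v : Fin n, v.val = u.val + k → (pathGraph n).dist u v ≤ k := by
  obtain ⟨m, rfl⟩ : ∃ m, n = m + 1 := ⟨n - 1, by omega⟩
  intro k
  induction k with
  | zero => intro u v h; have : u = v := Fin.ext (by omega); simp [this]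
  | succ k ih =>
    intro u v h
    have hlt : u.val + 1 < m + 1 := by have := v.isLt; omega
    set w : Fin (m + 1) := ⟨u.val + 1, hlt⟩ with hw
    have hadj : (pathGraph (m + 1)).Adj u w := by rw [pathGraph_adj]; left; rfl
    have h1 : (pathGraph (m + 1)).dist u w = 1 :=
      SimpleGraph.dist_eq_one_iff_adj.mpr hadj
    have h2 : (pathGraph (m + 1)).dist w v ≤ k := ih w v (by simp [hw]; omega)
    calc (pathGraph (m + 1)).dist u v
        ≤ (pathGraph (m + 1)).dist u w + (pathGraph (m + 1)).dist w v :=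
          (pathGraph_connected m).dist_triangle
      _ ≤ 1 + k := by omega
      _ = k + 1 := by omega

lemma pg_dist {n : ℕ} (u v : Fin n) :
    (pathGraph n).dist u v = max u.val v.val - min u.val v.val := by
  have hn : 0 < n := u.pos
  apply le_antisymm
  · rcases le_total u.val v.val with h | h
    · have := pg_dist_le_aux hn (v.val - u.val) u v (by omega)
      omega
    · have := pg_dist_le_aux hn (u.val - v.val) v u (by omega)
      rw [SimpleGraph.dist_comm] at this
      omega
  · obtain ⟨m, rfl⟩ : ∃ m, n = m + 1 := ⟨n - 1, by omega⟩
    obtain ⟨p, hp⟩ := (pathGraph_connected m).exists_walk_length_eq_dist u v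
    rw [← hp]
    exact pg_walk_len p

lemma pg_ecc_le {n : ℕ} (hn : 1 ≤ n) (v : Fin n) : ecc (pathGraph n) v ≤ n - 1 := by
  apply Finset.sup_le
  intro u _
  rw [pg_dist]
  have := u.isLt; have := v.isLt
  omega

lemma pg_ecc_zero {n : ℕ} (hn : 2 ≤ n) :
    ecc (pathGraph n) (⟨0, Nat.zero_lt_of_lt hn⟩ : Fin n) = n - 1 := by
  apply le_antisymm (pg_ecc_le (by omega) _)
  have hd : (pathGraph n).dist (⟨0, Nat.zero_lt_of_lt hn⟩ : Fin n) (⟨n - 1, by omega⟩ : Fin n) = n - 1 := by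
    rw [pg_dist]; simp
  calc n - 1 = (pathGraph n).dist (⟨0, Nat.zero_lt_of_lt hn⟩ : Fin n) (⟨n - 1, by omega⟩ : Fin n) := hd.symm
    _ ≤ ecc (pathGraph n) ⟨0, Nat.zero_lt_of_lt hn⟩ :=
      Finset.le_sup (f := fun u => (pathGraph n).dist ⟨0, Nat.zero_lt_of_lt hn⟩ u)
        (Finset.mem_univ (⟨n - 1, by omega⟩ : Fin n))

lemma pg_sum_le {n : ℕ} (hn : 2 ≤ n) (f : Fin n → ℕ)
    (hf : IsBnIndep (pathGraph n) f) : ∑ v, f v ≤ n - 1 := by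
  obtain ⟨hb, hind⟩ := hf
  set S : Finset (Fin n) := Finset.univ.filter (fun v => 1 ≤ f v) with hS
  have hsum : ∑ v, f v = ∑ v ∈ S, f v := by
    rw [hS, Finset.sum_filter_of_ne]
    intro v _ h
    omega
  rcases S.eq_empty_or_nonempty with he | hne
  · rw [hsum, he]; simp
  · set m := S.min' hne with hm
    set M := S.max' hne with hM
    have hmS : m ∈ S := S.min'_mem hne
    have hMS : M ∈ S := S.max'_mem hne
    have hfm : 1 ≤ f m := (Finset.mem_filter.mp hmS).2
    by_cases hmm : m = M
    · -- S = {m}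
      have hSm : S = {m} := by
        apply Finset.eq_singleton_iff_unique_mem.mpr
        refine ⟨hmS, fun x hx => ?_⟩
        have h1 : m.val ≤ x.val := S.min'_le x hx
        have h2 : x.val ≤ M.val := S.le_max' x hx
        have h3 : m.val = M.val := congrArg Fin.val hmm
        exact Fin.ext (by omega)
      rw [hsum, hSm, Finset.sum_singleton]
      calc f m ≤ ecc (pathGraph n) m := hb m
        _ ≤ n - 1 := pg_ecc_le (by omega) m
    · have hmM : m < M := lt_of_le_of_ne (S.min'_le M hMS) hmm
      -- key facts for members of S.erase m
      have key : ∀ v ∈ S.erase m, m.val + f m + f v ≤ v.val := by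
        intro v hv
        obtain ⟨hvm, hvS⟩ := Finset.mem_erase.mp hv
        have hfv : 1 ≤ f v := (Finset.mem_filter.mp hvS).2
        have hd := hind m v (fun h => hvm h.symm) hfm hfv
        rw [pg_dist] at hd
        have hmv : m ≤ v := S.min'_le v hvS
        have hmv' : m.val ≤ v.val := hmv
        omega
      -- disjoint intervals
      have hdisj : ∀ u ∈ (S.erase m), ∀ v ∈ (S.erase m), u ≠ v →
          Disjoint (Finset.Ioc (u.val - f u) u.val) (Finset.Ioc (v.val - f v) v.val) := by
        intro u hu v hv huv
        obtain ⟨hum, huS⟩ := Finset.mem_erase.mp hu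
        obtain ⟨hvm, hvS⟩ := Finset.mem_erase.mp hv
        have hfu : 1 ≤ f u := (Finset.mem_filter.mp huS).2
        have hfv : 1 ≤ f v := (Finset.mem_filter.mp hvS).2
        have hd := hind u v huv hfu hfv
        rw [pg_dist] at hd
        rw [Finset.disjoint_left]
        intro x hx hx'
        simp only [Finset.mem_Ioc] at hx hx'
        rcases le_total u.val v.val with h | h <;> omega
      have hcard : ∑ v ∈ S.erase m, f v =
          ((S.erase m).biUnion (fun v => Finset.Ioc (v.val - f v) v.val)).card := by
        rw [Finset.card_biUnion hdisj]
        apply Finset.sum_congr rfl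
        intro v hv
        have := key v hv
        rw [Nat.card_Ioc]
        omega
      have hsub : (S.erase m).biUnion (fun v => Finset.Ioc (v.val - f v) v.val) ⊆
          Finset.Ioc (m.val + f m) M.val := by
        intro x hx
        obtain ⟨v, hv, hxv⟩ := Finset.mem_biUnion.mp hx
        obtain ⟨hvm, hvS⟩ := Finset.mem_erase.mp hv
        have := key v hv
        have hvM : v.val ≤ M.val := S.le_max' v hvS
        simp only [Finset.mem_Ioc] at hxv ⊢
        omega
      have hle : ∑ v ∈ S.erase m, f v ≤ M.val - (m.val + f m) := by
        rw [hcard]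
        calc _ ≤ (Finset.Ioc (m.val + f m) M.val).card := Finset.card_le_card hsub
          _ = M.val - (m.val + f m) := Nat.card_Ioc _ _
      have hfM : 1 ≤ f M := (Finset.mem_filter.mp hMS).2
      have hdmM := hind m M (fun h => hmm h) hfm hfM
      rw [pg_dist] at hdmM
      have hmM' : m.val < M.val := hmM
      have hsplit : ∑ v ∈ S, f v = f m + ∑ v ∈ S.erase m, f v :=
        (Finset.add_sum_erase S f hmS).symm
      have hMlt := M.isLt
      rw [hsum, hsplit]
      omega
theorem alphaBn_pathGraph (n : ℕ) (hn : 2 ≤ n)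
    (f : Fin n → ℕ)
    (hf : f = fun i => if i = (⟨0, by omega⟩ : Fin n) then n - 1 else 0) :
    IsBnIndep (pathGraph n) f ∧ (∑ i, f i = n - 1) ∧
      alphaBn (pathGraph n) = n - 1 := by
  have hbn : IsBnIndep (pathGraph n) f := by
    constructor
    · intro v
      by_cases h : v = (⟨0, by omega⟩ : Fin n)
      · subst h
        rw [hf]
        simp [pg_ecc_zero hn]
      · rw [hf]
        simp [h]
    · intro u v huv hu hv
      by_cases h : u = (⟨0, by omega⟩ : Fin n)
      · have h' : v ≠ (⟨0, by omega⟩ : Fin n) := by rw [← h]; exact huv.symm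
        rw [hf] at hv
        simp [h'] at hv
      · rw [hf] at hu
        simp [h] at hu
  have hsum : ∑ i, f i = n - 1 := by
    rw [hf]
    simp
  refine ⟨hbn, hsum, ?_⟩
  apply le_antisymm
  · refine csSup_le ⟨n - 1, f, hbn, hsum⟩ ?_
    rintro k ⟨g, hg, rfl⟩
    exact pg_sum_le hn g hg
  · apply le_csSup
    · refine ⟨n - 1, ?_⟩
      rintro k ⟨g, hg, rfl⟩
      exact pg_sum_le hn g hg
    · exact ⟨f, hbn, hsum⟩
end

section
/- If f is a boundary independent broadcast on a connected graph G and v is a broadcasting vertex with f(v) ≥ 2 that has a vertex u in its private boundary (d(u,v) = f(v) and u hears no other broadcasting vertex), then the broadcast f' with f'(v) = f(v) − 1, f'(u) = 1, and f'(w) = f(w) otherwise, is boundary independent with the same cost as f. -/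
open SimpleGraph Finset

theorem bnIndep_shift_private_boundary {V : Type*} [Fintype V] [DecidableEq V]
    (G : SimpleGraph V) (hG : G.Connected) (f : V → ℕ) (hf : IsBnIndep G f)
    (v u : V) (hv : 2 ≤ f v) (hd : G.dist u v = f v)
    (hpriv : ∀ w, w ≠ v → 1 ≤ f w → ¬ G.dist u w ≤ f w) :
    IsBnIndep G (Function.update (Function.update f v (f v - 1)) u 1) ∧
      ∑ x, Function.update (Function.update f v (f v - 1)) u 1 x = ∑ x, f x := by
  have huv : u ≠ v := by
    intro h; subst h; simp [SimpleGraph.dist_self] at hd; omega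
  have hfu : f u = 0 := by
    by_contra h
    exact hpriv u huv (Nat.one_le_iff_ne_zero.mpr h) (by simp [SimpleGraph.dist_self])
  set g := Function.update (Function.update f v (f v - 1)) u 1 with hg
  have hvu : v ≠ u := Ne.symm huv
  have hgu : g u = 1 := by simp [hg]
  have hgv : g v = f v - 1 := by simp [hg, Function.update_apply, hvu]
  have hgw : ∀ w, w ≠ u → w ≠ v → g w = f w := by
    intro w h1 h2; simp [hg, Function.update_apply, h1, h2]
  constructor
  · constructor
    · intro x
      rcases eq_or_ne x u with rfl | hxu
      · rw [hgu]
        calc 1 ≤ G.dist x v := by omega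
        _ ≤ ecc G x := Finset.le_sup (Finset.mem_univ v)
      · rcases eq_or_ne x v with rfl | hxv
        · rw [hgv]; exact le_trans (by omega) (hf.1 x)
        · rw [hgw x hxu hxv]; exact hf.1 x
    · intro x y hxy hx hy
      have key : ∀ w, w ≠ u → w ≠ v → 1 ≤ f w → 1 + f w ≤ G.dist u w := by
        intro w _ h2 h3
        have := hpriv w h2 h3
        omega
      rcases eq_or_ne x u with rfl | hxu
      · rcases eq_or_ne y v with rfl | hyv
        · rw [hgu, hgv]; omega
        · rw [hgu, hgw y (Ne.symm hxy) hyv]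
          rw [hgw y (Ne.symm hxy) hyv] at hy
          exact key y (Ne.symm hxy) hyv hy
      · rcases eq_or_ne y u with rfl | hyu
        · rcases eq_or_ne x v with rfl | hxv
          · rw [hgu, hgv, SimpleGraph.dist_comm]; omega
          · rw [hgu, hgw x hxu hxv, SimpleGraph.dist_comm]
            rw [hgw x hxu hxv] at hx
            have := key x hxu hxv hx
            omega
        · have hx' : 1 ≤ f x := by
            rcases eq_or_ne x v with rfl | hxv
            · omega
            · rwa [hgw x hxu hxv] at hx
          have hy' : 1 ≤ f y := by
            rcases eq_or_ne y v with rfl | hyv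
            · omega
            · rwa [hgw y hyu hyv] at hy
          have hbase := hf.2 x y hxy hx' hy'
          have hgx : g x ≤ f x := by
            rcases eq_or_ne x v with rfl | hxv
            · rw [hgv]; omega
            · rw [hgw x hxu hxv]
          have hgy : g y ≤ f y := by
            rcases eq_or_ne y v with rfl | hyv
            · rw [hgv]; omega
            · rw [hgw y hyu hyv]
          omega
  · have hvmem : v ∈ Finset.univ \ {u} :=
      Finset.mem_sdiff.mpr ⟨Finset.mem_univ v, by simp [hvu]⟩
    have h1 : ∑ x, g x = 1 + ∑ x ∈ Finset.univ \ {u}, Function.update f v (f v - 1) x := by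
      rw [hg, Finset.sum_update_of_mem (Finset.mem_univ u)]
    have h2 : ∑ x ∈ Finset.univ \ {u}, Function.update f v (f v - 1) x
        = (f v - 1) + ∑ x ∈ (Finset.univ \ {u}) \ {v}, f x :=
      Finset.sum_update_of_mem hvmem f _
    have h3 : ∑ x, f x = f u + ∑ x ∈ Finset.univ \ {u}, f x :=
      Finset.sum_eq_add_sum_sdiff_singleton_of_mem (Finset.mem_univ u) f
    have h4 : ∑ x ∈ Finset.univ \ {u}, f x
        = f v + ∑ x ∈ (Finset.univ \ {u}) \ {v}, f x :=
      Finset.sum_eq_add_sum_sdiff_singleton_of_mem hvmem f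
    omega
end
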